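/- Let V be a finite-dimensional complex vector space, f : C → End(V) holomorphic, and A : Ω → End(V) holomorphic on a neighborhood Ω of 0 and given by a rational function. Define Δ_z^N A(0) ∈ End(V^{⊕(N+1)}) as the N-th iterated jet (the block matrix with (i,j) entry A^{(j−i)}(0)/(j−i)! for j ≥ i and 0 otherwise). If for every N ≥ 0 the operator Δ_z^N f(0) vanishes on ker(Δ_z^N A(0)), then the meromorphic function z ↦ f(z) A(z)⁻¹ extends holomorphically to a neighborhood of 0. -/

import Mathlib

open scoped BigOperators

noncomputable section

/-- The action on jets of the `N`-th iterated jet operator `Δ_z^N A(0)`: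
the block operator on `V^{⊕(N+1)}` with `(i,j)` entry `A^{(j−i)}(0)/(j−i)!` for
`j ≥ i` and `0` otherwise. -/
def jetApply {E : Type*} [NormedAddCommGroup E] [NormedSpace ℂ E]
    (N : ℕ) (A : ℂ → (E →L[ℂ] E)) (v : Fin (N + 1) → E) : Fin (N + 1) → E :=
  fun i => ∑ j : Fin (N + 1), if (i : ℕ) ≤ (j : ℕ) then
    ((((j : ℕ) - (i : ℕ)).factorial : ℂ))⁻¹ • (iteratedDeriv ((j : ℕ) - (i : ℕ)) A 0) (v j)
  else 0

section auxiliary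
variable {X Y : Type*} [NormedAddCommGroup X] [NormedSpace ℂ X]
  [NormedAddCommGroup Y] [NormedSpace ℂ Y]

lemma myIteratedDeriv_const_fun {n : ℕ} (hn : n ≠ 0) (y : Y) :
    iteratedDeriv n (fun _ : ℂ => y) = fun _ => 0 := by
  funext x
  rw [iteratedDeriv_eq_iteratedFDeriv, iteratedFDeriv_const_of_ne hn]
  simp

lemma myDeriv_z_smul (y : Y) : deriv (fun z : ℂ => z • y) = fun _ : ℂ => y := by
  funext z
  rw [deriv_smul_const differentiableAt_fun_id]
  simp

lemma myIteratedDeriv_z_smul_two_le (y : Y) {n : ℕ} (hn : 2 ≤ n) :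
    iteratedDeriv n (fun z : ℂ => z • y) = fun _ => 0 := by
  obtain ⟨k, rfl⟩ : ∃ k, n = k + 2 := ⟨n - 2, by omega⟩
  rw [show k + 2 = (k + 1) + 1 by ring, iteratedDeriv_succ', myDeriv_z_smul]
  exact myIteratedDeriv_const_fun (Nat.succ_ne_zero k) y

lemma myAnalyticOnNhd.iteratedDeriv [CompleteSpace Y] {s : Set ℂ} {c : ℂ → Y}
    (hc : AnalyticOnNhd ℂ c s) (n : ℕ) : AnalyticOnNhd ℂ (iteratedDeriv n c) s := by
  induction n with
  | zero => simpa [iteratedDeriv_zero] using hc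
  | succ k ih => rw [iteratedDeriv_succ]; exact ih.deriv


lemma leibniz_on [CompleteSpace X] [CompleteSpace Y] {s : Set ℂ} (hs : IsOpen s)
    {c : ℂ → X →L[ℂ] Y} {w : ℂ → X}
    (hc : AnalyticOnNhd ℂ c s) (hw : AnalyticOnNhd ℂ w s) (n : ℕ) :
    ∀ z ∈ s, iteratedDeriv n (fun t => (c t) (w t)) z
      = ∑ j ∈ Finset.range (n + 1), (n.choose j : ℂ) •
          (iteratedDeriv j c z) (iteratedDeriv (n - j) w z) := by
  have hci : ∀ j, AnalyticOnNhd ℂ (iteratedDeriv j c) s :=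
    fun j => myAnalyticOnNhd.iteratedDeriv hc j
  have hwi : ∀ j, AnalyticOnNhd ℂ (iteratedDeriv j w) s :=
    fun j => myAnalyticOnNhd.iteratedDeriv hw j
  induction n with
  | zero =>
    intro z hz
    simp [iteratedDeriv_zero]
  | succ n ih =>
    intro z hz
    -- T p q
    set T : ℕ → ℕ → Y := fun p q => (iteratedDeriv p c z) (iteratedDeriv q w z) with hT
    have hterm : ∀ j, HasDerivAt
        (fun t => (iteratedDeriv j c t) (iteratedDeriv (n - j) w t))
        (T (j + 1) (n - j) + T j (n - j + 1)) z := by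
      intro j
      have h1 : HasDerivAt (iteratedDeriv j c) (iteratedDeriv (j + 1) c z) z := by
        have := ((hci j z hz).differentiableAt).hasDerivAt
        rwa [show deriv (iteratedDeriv j c) z = iteratedDeriv (j + 1) c z by
          rw [iteratedDeriv_succ]] at this
      have h2 : HasDerivAt (iteratedDeriv (n - j) w) (iteratedDeriv (n - j + 1) w z) z := by
        have := ((hwi (n - j) z hz).differentiableAt).hasDerivAt
        rwa [show deriv (iteratedDeriv (n - j) w) z = iteratedDeriv (n - j + 1) w z by
          rw [iteratedDeriv_succ]] at this
      simpa [hT] using h1.clm_apply h2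
    have hsum : HasDerivAt
        (fun t => ∑ j ∈ Finset.range (n + 1), (n.choose j : ℂ) •
          (iteratedDeriv j c t) (iteratedDeriv (n - j) w t))
        (∑ j ∈ Finset.range (n + 1), (n.choose j : ℂ) •
          (T (j + 1) (n - j) + T j (n - j + 1))) z :=
      HasDerivAt.fun_sum (fun j _ => ((hterm j).const_smul ((n.choose j : ℂ))))
    have hcongr : iteratedDeriv n (fun t => (c t) (w t))
        =ᶠ[nhds z] (fun t => ∑ j ∈ Finset.range (n + 1), (n.choose j : ℂ) •
          (iteratedDeriv j c t) (iteratedDeriv (n - j) w t)) := by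
      filter_upwards [hs.mem_nhds hz] with t ht using ih t ht
    rw [iteratedDeriv_succ, hcongr.deriv_eq, hsum.deriv]
    show ∑ j ∈ Finset.range (n + 1), (n.choose j : ℂ) • (T (j + 1) (n - j) + T j (n - j + 1))
      = ∑ j ∈ Finset.range (n + 1 + 1), ((n + 1).choose j : ℂ) • T j (n + 1 - j)
    have h2nd : ∑ j ∈ Finset.range (n + 1), (n.choose j : ℂ) • T j (n - j + 1)
        = (∑ j ∈ Finset.range (n + 1), (n.choose (j + 1) : ℂ) • T (j + 1) (n - j))
          + T 0 (n + 1) := by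
      rw [Finset.sum_range_succ' (fun j => (n.choose j : ℂ) • T j (n - j + 1)) n]
      congr 1
      · rw [Finset.sum_range_succ]
        have hz0 : (n.choose (n + 1) : ℂ) • T (n + 1) (n - n) = 0 := by
          simp [Nat.choose_succ_self]
        rw [hz0, add_zero]
        refine Finset.sum_congr rfl fun k hk => ?_
        have hk' : k < n := Finset.mem_range.mp hk
        have he : n - (k + 1) + 1 = n - k := by omega
        rw [he]
      · simp
    calc ∑ j ∈ Finset.range (n + 1), (n.choose j : ℂ) • (T (j + 1) (n - j) + T j (n - j + 1))
        = (∑ j ∈ Finset.range (n + 1), (n.choose j : ℂ) • T (j + 1) (n - j))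
          + ∑ j ∈ Finset.range (n + 1), (n.choose j : ℂ) • T j (n - j + 1) := by
          rw [← Finset.sum_add_distrib]
          exact Finset.sum_congr rfl fun j _ => smul_add _ _ _
      _ = (∑ j ∈ Finset.range (n + 1), ((n.choose j : ℂ) + (n.choose (j + 1) : ℂ)) • T (j + 1) (n - j))
          + T 0 (n + 1) := by
          rw [h2nd, ← add_assoc, ← Finset.sum_add_distrib]
          congr 1
          exact Finset.sum_congr rfl fun j _ => (add_smul _ _ _).symm
      _ = (∑ j ∈ Finset.range (n + 1), (((n + 1).choose (j + 1) : ℕ) : ℂ) • T (j + 1) (n + 1 - (j + 1)))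
          + T 0 (n + 1) := by
          congr 1
          refine Finset.sum_congr rfl fun j _ => ?_
          rw [Nat.choose_succ_succ, Nat.cast_add, Nat.succ_sub_succ]
      _ = ∑ j ∈ Finset.range (n + 1 + 1), ((n + 1).choose j : ℂ) • T j (n + 1 - j) := by
          rw [Finset.sum_range_succ' (fun j => (((n + 1).choose j : ℕ) : ℂ) • T j (n + 1 - j)) (n + 1)]
          congr 1
          simp

lemma leibniz_at [CompleteSpace X] [CompleteSpace Y] {z₀ : ℂ}
    {c : ℂ → X →L[ℂ] Y} {w : ℂ → X}
    (hc : AnalyticAt ℂ c z₀) (hw : AnalyticAt ℂ w z₀) (n : ℕ) :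
    iteratedDeriv n (fun t => (c t) (w t)) z₀
      = ∑ j ∈ Finset.range (n + 1), (n.choose j : ℂ) •
          (iteratedDeriv j c z₀) (iteratedDeriv (n - j) w z₀) := by
  have h := (hc.eventually_analyticAt.and hw.eventually_analyticAt)
  obtain ⟨s, hsub, hsopen, hz₀⟩ := eventually_nhds_iff.mp h
  exact leibniz_on hsopen (fun z hz => (hsub z hz).1) (fun z hz => (hsub z hz).2) n z₀ hz₀

lemma iteratedDeriv_clm_comp_const [CompleteSpace X] [CompleteSpace Y] {z₀ : ℂ}
    (T : X →L[ℂ] Y) {w : ℂ → X} (hw : AnalyticAt ℂ w z₀) (n : ℕ) :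
    iteratedDeriv n (fun z => T (w z)) z₀ = T (iteratedDeriv n w z₀) := by
  have h := leibniz_at (c := fun _ => T) analyticAt_const hw n
  rw [h, Finset.sum_eq_single 0]
  · simp [iteratedDeriv_zero]
  · intro j _ hj
    rw [myIteratedDeriv_const_fun hj T]
    simp
  · intro h0; simp at h0

/-- derivatives of `z^m • ψ z` at 0 vanish below order m -/
lemma vanish [CompleteSpace X] :
    ∀ m : ℕ, ∀ (ψ : ℂ → X), AnalyticAt ℂ ψ 0 →
      ∀ s < m, iteratedDeriv s (fun z : ℂ => z ^ m • ψ z) 0 = 0 := by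
  intro m
  induction m with
  | zero => intro ψ hψ s hs; omega
  | succ m' ih =>
    intro ψ hψ s hs
    set φ : ℂ → X := fun z => z ^ m' • ψ z with hφdef
    have hφ : AnalyticAt ℂ φ 0 := ((analyticAt_id).pow m').smul hψ
    have hc : AnalyticAt ℂ (fun z : ℂ => z • (1 : X →L[ℂ] X)) 0 :=
      (analyticAt_id).smul analyticAt_const
    have hfun : (fun z : ℂ => z ^ (m' + 1) • ψ z)
        = fun z => (z • (1 : X →L[ℂ] X)) (φ z) := by
      funext z
      have : z ^ (m' + 1) • ψ z = (z * z ^ m') • ψ z := by rw [← pow_succ']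
      rw [this, mul_smul]
      simp only [hφdef, ContinuousLinearMap.smul_apply, ContinuousLinearMap.one_apply]
    rw [hfun, leibniz_at hc hφ s]
    refine Finset.sum_eq_zero fun j hj => ?_
    match j with
    | 0 => simp [iteratedDeriv_zero]
    | 1 =>
      have h1 : iteratedDeriv 1 (fun z : ℂ => z • (1 : X →L[ℂ] X)) 0 = 1 := by
        rw [iteratedDeriv_one]; exact congrFun (myDeriv_z_smul (1 : X →L[ℂ] X)) 0
      rw [h1]
      have hs1 : s - 1 < m' := by
        have : 1 ≤ s := by simpa using Finset.mem_range.mp hj |> fun h => by omega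
        omega
      rw [show iteratedDeriv (s - 1) φ 0 = 0 from ih ψ hψ (s - 1) hs1]
      simp
    | (j + 2) =>
      rw [myIteratedDeriv_z_smul_two_le (1 : X →L[ℂ] X) (by omega)]
      simp


lemma shift [CompleteSpace X] :
    ∀ (m : ℕ) (F : ℂ → X), AnalyticAt ℂ F 0 → (∀ j < m, iteratedDeriv j F 0 = 0) →
      ∃ H : ℂ → X, AnalyticAt ℂ H 0 ∧ ∀ᶠ z in nhds (0 : ℂ), F z = z ^ m • H z := by
  intro m
  induction m with
  | zero =>
    intro F hF _
    exact ⟨F, hF, Filter.Eventually.of_forall fun z => by simp⟩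
  | succ m ih =>
    intro F hF hvan
    have hF0 : F 0 = 0 := by
      have := hvan 0 (Nat.succ_pos m)
      rwa [iteratedDeriv_zero] at this
    set F₁ : ℂ → X := dslope F 0 with hF₁def
    have hF₁ : AnalyticAt ℂ F₁ 0 := by
      obtain ⟨p, hp⟩ := hF
      exact hp.has_fpower_series_dslope_fslope.analyticAt
    have hFeq : ∀ z, F z = z • F₁ z := by
      intro z
      have h := sub_smul_dslope F 0 z
      rw [sub_zero, hF0, sub_zero] at h
      exact h.symm
    have hc : AnalyticAt ℂ (fun z : ℂ => z • (1 : X →L[ℂ] X)) 0 :=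
      (analyticAt_id).smul analyticAt_const
    have hfun : F = fun z => (z • (1 : X →L[ℂ] X)) (F₁ z) := by
      funext z
      simp only [ContinuousLinearMap.smul_apply, ContinuousLinearMap.one_apply]
      exact hFeq z
    have hvan1 : ∀ j < m, iteratedDeriv j F₁ 0 = 0 := by
      intro j hj
      have h0 : iteratedDeriv (j + 1) F 0 = 0 := hvan (j + 1) (by omega)
      rw [hfun, leibniz_at hc hF₁ (j + 1)] at h0
      rw [Finset.sum_eq_single 1] at h0
      · have h1 : iteratedDeriv 1 (fun z : ℂ => z • (1 : X →L[ℂ] X)) 0 = 1 := by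
          rw [iteratedDeriv_one]; exact congrFun (myDeriv_z_smul (1 : X →L[ℂ] X)) 0
        rw [h1] at h0
        simp only [ContinuousLinearMap.one_apply] at h0
        have hne : ((j + 1).choose 1 : ℂ) ≠ 0 := by
          simp [Nat.choose_one_right]
          exact_mod_cast Nat.succ_ne_zero j
        rcases smul_eq_zero.mp h0 with h | h
        · exact absurd h hne
        · simpa using h
      · intro l hl hlne
        match l with
        | 0 => simp [iteratedDeriv_zero]
        | 1 => exact absurd rfl hlne
        | (l + 2) =>
          rw [myIteratedDeriv_z_smul_two_le (1 : X →L[ℂ] X) (by omega)]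
          simp
      · intro habs
        exfalso
        exact habs (Finset.mem_range.mpr (by omega))
    obtain ⟨H, hH, hHe⟩ := ih F₁ hF₁ hvan1
    refine ⟨H, hH, ?_⟩
    filter_upwards [hHe] with z hz
    rw [hFeq z, hz, ← mul_smul, ← pow_succ']

lemma jet_eq {E : Type*} [NormedAddCommGroup E] [NormedSpace ℂ E] [CompleteSpace E]
    {s : Set ℂ} (hs : IsOpen s) (h0 : (0 : ℂ) ∈ s)
    {c : ℂ → E →L[ℂ] E} {w : ℂ → E}
    (hc : AnalyticOnNhd ℂ c s) (hw : AnalyticOnNhd ℂ w s) (N : ℕ) (i : Fin (N + 1)) :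
    jetApply N c (fun j => (((N - (j : ℕ)).factorial : ℂ))⁻¹ • iteratedDeriv (N - (j : ℕ)) w 0) i
      = (((N - (i : ℕ)).factorial : ℂ))⁻¹ • iteratedDeriv (N - (i : ℕ)) (fun t => c t (w t)) 0 := by
  have hiN : (i : ℕ) ≤ N := by omega
  set g : ℕ → E := fun j => if (i : ℕ) ≤ j then
      (((j - (i : ℕ)).factorial : ℂ))⁻¹ • (iteratedDeriv (j - (i : ℕ)) c 0)
        ((((N - j).factorial : ℂ))⁻¹ • iteratedDeriv (N - j) w 0)
    else 0 with hg
  have h1 : jetApply N c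
      (fun j => (((N - (j : ℕ)).factorial : ℂ))⁻¹ • iteratedDeriv (N - (j : ℕ)) w 0) i
      = ∑ j ∈ Finset.range (N + 1), g j := by
    rw [jetApply, ← Fin.sum_univ_eq_sum_range g (N + 1)]
  rw [h1]
  have h2 : ∑ j ∈ Finset.range (N + 1), g j
      = ∑ j ∈ (Finset.range (N + 1)).filter (fun j => (i : ℕ) ≤ j), g j := by
    refine (Finset.sum_filter_of_ne fun x _ hne => ?_).symm
    by_contra hij
    exact hne (by simp [hg, if_neg hij])
  rw [h2]
  have hfilter : (Finset.range (N + 1)).filter (fun j => (i : ℕ) ≤ j)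
      = Finset.Ico (i : ℕ) (N + 1) := by
    ext a
    simp only [Finset.mem_filter, Finset.mem_range, Finset.mem_Ico]
    omega
  rw [hfilter, Finset.sum_Ico_eq_sum_range]
  have hNi : N + 1 - (i : ℕ) = (N - (i : ℕ)) + 1 := by omega
  rw [hNi]
  rw [leibniz_on hs hc hw (N - (i : ℕ)) 0 h0, Finset.smul_sum]
  refine Finset.sum_congr rfl fun j hj => ?_
  have hjle : j ≤ N - (i : ℕ) := by
    have := Finset.mem_range.mp hj; omega
  have e1 : (i : ℕ) + j - (i : ℕ) = j := by omega
  have e2 : N - ((i : ℕ) + j) = (N - (i : ℕ)) - j := by omega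
  have e3 : (i : ℕ) ≤ (i : ℕ) + j := by omega
  simp only [hg, if_pos e3, e1, e2]
  rw [map_smul, smul_smul, smul_smul]
  congr 1
  have key : (((N - (i : ℕ)).choose j : ℕ) : ℂ) * (j.factorial : ℕ) * (((N - (i : ℕ)) - j).factorial : ℕ)
      = (((N - (i : ℕ)).factorial : ℕ) : ℂ) := by
    exact_mod_cast congrArg (Nat.cast : ℕ → ℂ) (Nat.choose_mul_factorial_mul_factorial hjle)
  have hf1 : ((j.factorial : ℕ) : ℂ) ≠ 0 := Nat.cast_ne_zero.mpr (Nat.factorial_ne_zero _)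
  have hf2 : ((((N - (i : ℕ)) - j).factorial : ℕ) : ℂ) ≠ 0 := Nat.cast_ne_zero.mpr (Nat.factorial_ne_zero _)
  have hf3 : (((N - (i : ℕ)).factorial : ℕ) : ℂ) ≠ 0 := Nat.cast_ne_zero.mpr (Nat.factorial_ne_zero _)
  field_simp
  linear_combination -key

end auxiliary

set_option maxHeartbeats 2000000 in
/-- If `Δ_z^N f(0)` vanishes on `ker (Δ_z^N A(0))` for every `N`, where `A` is rational
and holomorphic near `0`, then `f(z) A(z)⁻¹` extends holomorphically to a
neighborhood of `0`. -/
theorem divide_by_rational_family {E : Type*} [NormedAddCommGroup E] [NormedSpace ℂ E]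
    [FiniteDimensional ℂ E]
    (f : ℂ → (E →L[ℂ] E)) (hf : Differentiable ℂ f)
    (Ω : Set ℂ) (hΩ : IsOpen Ω) (h0 : (0 : ℂ) ∈ Ω)
    (A : ℂ → (E →L[ℂ] E)) (hA : DifferentiableOn ℂ A Ω)
    (hrat : ∃ (k : ℕ) (C : Fin k → (E →L[ℂ] E)) (q : Polynomial ℂ), q ≠ 0 ∧
      ∀ z ∈ Ω, Polynomial.eval z q ≠ 0 ∧
        Polynomial.eval z q • A z = ∑ i : Fin k, z ^ (i : ℕ) • C i)
    (hker : ∀ (N : ℕ) (v : Fin (N + 1) → E),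
      jetApply N A v = 0 → jetApply N f v = 0) :
    ∃ (U : Set ℂ) (g : ℂ → (E →L[ℂ] E)), IsOpen U ∧ (0 : ℂ) ∈ U ∧
      DifferentiableOn ℂ g U ∧
      ∀ z ∈ U, IsUnit (A z) → g z = f z * Ring.inverse (A z) := by
  classical
  obtain ⟨k, C, q, hqne, hq⟩ := hrat
  have hq0 : Polynomial.eval 0 q ≠ 0 := (hq 0 h0).1
  set P : ℂ → (E →L[ℂ] E) := fun z => ∑ i : Fin k, z ^ (i : ℕ) • C i with hPdef
  have hP : Differentiable ℂ P :=
    Differentiable.fun_sum fun i _ => (differentiable_pow (i : ℕ)).smul_const (C i)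
  have hPA : ∀ z ∈ Ω, Polynomial.eval z q • A z = P z := fun z hz => (hq z hz).2
  -- matrices
  set n := Module.finrank ℂ E with hn
  let b : Module.Basis (Fin n) ℂ E := Module.finBasis ℂ E
  set M : ℂ → Matrix (Fin n) (Fin n) ℂ :=
    fun z => LinearMap.toMatrix b b (P z : E →ₗ[ℂ] E) with hMdef
  have hM : ∀ i j, Differentiable ℂ (fun z => M z i j) := by
    intro i j
    have heq : (fun z => M z i j) = fun z =>
        (LinearMap.toContinuousLinearMap (b.coord i)) ((P z) (b j)) := by
      funext z
      simp [hMdef, LinearMap.toMatrix_apply, Module.Basis.coord_apply]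
    rw [heq]
    exact (differentiable_const _).clm_apply (hP.clm_apply (differentiable_const _))
  set d : ℂ → ℂ := fun z => (M z).det with hddef
  set adjM : ℂ → Matrix (Fin n) (Fin n) ℂ := fun z => (M z).adjugate with hadjdef
  have det_diff : ∀ (Mf : ℂ → Matrix (Fin n) (Fin n) ℂ),
      (∀ i j, Differentiable ℂ (fun z => Mf z i j)) →
      Differentiable ℂ (fun z => (Mf z).det) := by
    intro Mf h
    have heq : (fun z => (Mf z).det) = fun z =>
        ∑ σ : Equiv.Perm (Fin n), ((Equiv.Perm.sign σ : ℤ) : ℂ) * ∏ i, Mf z (σ i) i := by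
      funext z; rw [Matrix.det_apply']
    rw [heq]
    exact Differentiable.fun_sum fun σ _ =>
      (Differentiable.fun_finsetProd fun i _ => h (σ i) i).const_mul _
  have hd : Differentiable ℂ d := det_diff M hM
  have hadj : ∀ i j, Differentiable ℂ (fun z => adjM z i j) := by
    intro i j
    have heq : (fun z => adjM z i j) = fun z => ((M z).updateRow j (Pi.single i 1)).det := by
      funext z; rw [hadjdef]; exact Matrix.adjugate_apply _ _ _
    rw [heq]
    refine det_diff _ fun i' j' => ?_
    by_cases h : i' = j
    · simp only [Matrix.updateRow_apply, h, if_pos rfl]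
      exact differentiable_const _
    · simp only [Matrix.updateRow_apply, if_neg h]
      exact hM i' j'
  set G : ℂ → (E →L[ℂ] E) :=
    fun z => LinearMap.toContinuousLinearMap (Matrix.toLin b b (adjM z)) with hGdef
  have hGsum : G = fun z => ∑ i : Fin n, ∑ j : Fin n, adjM z i j •
      LinearMap.toContinuousLinearMap (Matrix.toLin b b (Matrix.single i j 1)) := by
    funext z
    show LinearMap.toContinuousLinearMap ((Matrix.toLin b b) (adjM z)) = _
    conv_lhs => rw [Matrix.matrix_eq_sum_single (adjM z)]
    rw [map_sum, map_sum]
    refine Finset.sum_congr rfl fun i _ => ?_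
    rw [map_sum, map_sum]
    refine Finset.sum_congr rfl fun j _ => ?_
    rw [show Matrix.single i j (adjM z i j)
        = adjM z i j • Matrix.single i j 1 by
      rw [Matrix.smul_single, smul_eq_mul, mul_one], map_smul, map_smul]
  have hG : Differentiable ℂ G := by
    rw [hGsum]
    exact Differentiable.fun_sum fun i _ => Differentiable.fun_sum fun j _ =>
      (hadj i j).smul_const _
  -- algebra identities
  have hPG : ∀ z, (P z) * (G z) = d z • (1 : E →L[ℂ] E) := by
    intro z
    have hlin : (P z : E →ₗ[ℂ] E) ∘ₗ (Matrix.toLin b b (adjM z)) = d z • LinearMap.id := by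
      calc (P z : E →ₗ[ℂ] E) ∘ₗ Matrix.toLin b b (adjM z)
          = Matrix.toLin b b (M z) ∘ₗ Matrix.toLin b b (adjM z) := by
            rw [hMdef, Matrix.toLin_toMatrix]
        _ = Matrix.toLin b b (M z * adjM z) := (Matrix.toLin_mul b b b _ _).symm
        _ = Matrix.toLin b b (d z • 1) := by rw [hadjdef, Matrix.mul_adjugate]
        _ = d z • LinearMap.id := by rw [map_smul, Matrix.toLin_one]
    ext u
    have := LinearMap.congr_fun hlin u
    simpa [ContinuousLinearMap.mul_apply, hGdef] using this
  have hGP : ∀ z, (G z) * (P z) = d z • (1 : E →L[ℂ] E) := by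
    intro z
    have hlin : (Matrix.toLin b b (adjM z)) ∘ₗ (P z : E →ₗ[ℂ] E) = d z • LinearMap.id := by
      calc (Matrix.toLin b b (adjM z)) ∘ₗ (P z : E →ₗ[ℂ] E)
          = Matrix.toLin b b (adjM z) ∘ₗ Matrix.toLin b b (M z) := by
            rw [hMdef, Matrix.toLin_toMatrix]
        _ = Matrix.toLin b b (adjM z * M z) := (Matrix.toLin_mul b b b _ _).symm
        _ = Matrix.toLin b b (d z • 1) := by rw [hadjdef, Matrix.adjugate_mul]
        _ = d z • LinearMap.id := by rw [map_smul, Matrix.toLin_one]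
    ext u
    have := LinearMap.congr_fun hlin u
    simpa [ContinuousLinearMap.mul_apply, hGdef] using this
  -- analyticity
  have hf_an : AnalyticOnNhd ℂ f Ω := (hf.differentiableOn).analyticOnNhd hΩ
  have hA_an : AnalyticOnNhd ℂ A Ω := hA.analyticOnNhd hΩ
  have hd_an : AnalyticAt ℂ d 0 :=
    ((hd.differentiableOn).analyticOnNhd isOpen_univ) 0 (Set.mem_univ 0)
  -- units and determinants
  have hunit_det : ∀ z ∈ Ω, IsUnit (A z) → d z ≠ 0 := by
    intro z hz hu
    have hqz := (hq z hz).1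
    have hPunit : IsUnit (P z) := by
      rw [← hPA z hz]
      have hsm : Polynomial.eval z q • A z
          = (Polynomial.eval z q • (1 : E →L[ℂ] E)) * A z := by
        rw [smul_mul_assoc, one_mul]
      rw [hsm]
      have h1 : IsUnit (Polynomial.eval z q • (1 : E →L[ℂ] E)) := by
        refine ⟨⟨Polynomial.eval z q • (1 : E →L[ℂ] E),
          (Polynomial.eval z q)⁻¹ • (1 : E →L[ℂ] E), ?_, ?_⟩, rfl⟩
        · rw [smul_mul_assoc, mul_smul_comm, smul_smul, one_mul,
            mul_inv_cancel₀ hqz, one_smul]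
        · rw [smul_mul_assoc, mul_smul_comm, smul_smul, one_mul,
            inv_mul_cancel₀ hqz, one_smul]
      exact h1.mul hu
    obtain ⟨v, hv⟩ := hPunit
    have hLunit : IsUnit (P z : E →ₗ[ℂ] E) := by
      refine ⟨⟨(P z : E →ₗ[ℂ] E), ((v⁻¹ : (E →L[ℂ] E)ˣ) : E →L[ℂ] E), ?_, ?_⟩, rfl⟩
      · have : ((v : E →L[ℂ] E) * ((v⁻¹ : (E →L[ℂ] E)ˣ) : E →L[ℂ] E) : E →L[ℂ] E)
            = 1 := by rw [← Units.val_mul, mul_inv_cancel, Units.val_one]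
        rw [hv] at this
        calc (P z : E →ₗ[ℂ] E) * ((v⁻¹ : (E →L[ℂ] E)ˣ) : E →L[ℂ] E)
            = ((P z * ((v⁻¹ : (E →L[ℂ] E)ˣ) : E →L[ℂ] E) : E →L[ℂ] E) : E →ₗ[ℂ] E) := rfl
          _ = ((1 : E →L[ℂ] E) : E →ₗ[ℂ] E) := by rw [this]
          _ = 1 := rfl
      · have : (((v⁻¹ : (E →L[ℂ] E)ˣ) : E →L[ℂ] E) * (v : E →L[ℂ] E) : E →L[ℂ] E)
            = 1 := by rw [← Units.val_mul, inv_mul_cancel, Units.val_one]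
        rw [hv] at this
        calc ((v⁻¹ : (E →L[ℂ] E)ˣ) : E →L[ℂ] E) * (P z : E →ₗ[ℂ] E)
            = ((((v⁻¹ : (E →L[ℂ] E)ˣ) : E →L[ℂ] E) * P z : E →L[ℂ] E) : E →ₗ[ℂ] E) := rfl
          _ = ((1 : E →L[ℂ] E) : E →ₗ[ℂ] E) := by rw [this]
          _ = 1 := rfl
    have hdet : IsUnit (LinearMap.det (P z : E →ₗ[ℂ] E)) := hLunit.map LinearMap.det
    have hdz : d z = LinearMap.det (P z : E →ₗ[ℂ] E) := by
      rw [hddef, hMdef]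
      exact LinearMap.det_toMatrix b _
    rw [hdz]
    exact hdet.ne_zero
  by_cases hdall : ∀ z, d z = 0
  · refine ⟨Ω, 0, hΩ, h0, differentiableOn_const 0, ?_⟩
    intro z hz hu
    exact absurd (hdall z) (hunit_det z hz hu)
  push_neg at hdall
  obtain ⟨z₀, hz₀⟩ := hdall
  have horder : analyticOrderAt d 0 ≠ ⊤ := by
    intro htop
    rw [analyticOrderAt_eq_top] at htop
    have hall : Set.EqOn d 0 Set.univ :=
      AnalyticOnNhd.eqOn_zero_of_preconnected_of_eventuallyEq_zero
        ((hd.differentiableOn).analyticOnNhd isOpen_univ) isPreconnected_univ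
        (Set.mem_univ 0) htop
    exact hz₀ (hall (Set.mem_univ z₀))
  obtain ⟨m, hm⟩ : ∃ m : ℕ, analyticOrderAt d 0 = (m : ℕ∞) := by
    set o := analyticOrderAt d 0 with ho
    lift o to ℕ using horder with m hm'
    exact ⟨m, rfl⟩
  obtain ⟨uu, huu_an, huu0, huu_eq⟩ := (hd_an.analyticOrderAt_eq_natCast (n := m)).mp hm
  set F : ℂ → (E →L[ℂ] E) := fun z => f z * G z with hFdef
  have hFdiff : Differentiable ℂ F := hf.mul hG
  have hF_an : AnalyticAt ℂ F 0 :=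
    ((hFdiff.differentiableOn).analyticOnNhd isOpen_univ) 0 (Set.mem_univ 0)
  have hqeval_an : AnalyticAt ℂ (fun z => Polynomial.eval z q) 0 :=
    ((q.differentiable.differentiableOn).analyticOnNhd isOpen_univ) 0 (Set.mem_univ 0)
  have hFvan : ∀ s < m, iteratedDeriv s F 0 = 0 := by
    intro s hsm
    set N := m - 1 with hNdef
    have hNm : N + 1 = m := by omega
    have hsN : s ≤ N := by omega
    have key : ∀ u : E, iteratedDeriv s (fun z => (f z) (G z u)) 0 = 0 := by
      intro u
      set w : ℂ → E := fun z => G z u with hwdef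
      have hw_diff : Differentiable ℂ w := hG.clm_apply (differentiable_const u)
      have hw_an : AnalyticOnNhd ℂ w Ω := (hw_diff.differentiableOn).analyticOnNhd hΩ
      have hψ_an : AnalyticAt ℂ (fun z => ((Polynomial.eval z q)⁻¹ * uu z) • u) 0 :=
        ((hqeval_an.inv hq0).mul huu_an).smul analyticAt_const
      have hAw : ∀ s' ≤ N, iteratedDeriv s' (fun t => A t (w t)) 0 = 0 := by
        intro s' hs'
        have hev : (fun t => A t (w t)) =ᶠ[nhds 0]
            fun z => z ^ m • (((Polynomial.eval z q)⁻¹ * uu z) • u) := by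
          filter_upwards [hΩ.eventually_mem h0, huu_eq] with z hz hdz
          have hqz := (hq z hz).1
          have hAz : A z = (Polynomial.eval z q)⁻¹ • P z := by
            rw [← hPA z hz, smul_smul, inv_mul_cancel₀ hqz, one_smul]
          have h1 : A z (w z) = (Polynomial.eval z q)⁻¹ • ((P z * G z) u) := by
            rw [hAz]
            rfl
          rw [h1, hPG z]
          rw [sub_zero, smul_eq_mul] at hdz
          simp only [ContinuousLinearMap.smul_apply, ContinuousLinearMap.one_apply]
          rw [hdz, smul_smul, smul_smul]
          congr 1
          ring
        rw [Filter.EventuallyEq.iteratedDeriv_eq s' hev]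
        exact vanish m _ hψ_an s' (by omega)
      have hjetA : jetApply N A (fun j => (((N - (j : ℕ)).factorial : ℂ))⁻¹ •
          iteratedDeriv (N - (j : ℕ)) w 0) = 0 := by
        funext i
        rw [jet_eq hΩ h0 hA_an hw_an N i, hAw (N - (i : ℕ)) (by omega)]
        simp
      have hjetf := hker N _ hjetA
      have hcast := congrFun hjetf (⟨N - s, by omega⟩ : Fin (N + 1))
      rw [jet_eq hΩ h0 hf_an hw_an N (⟨N - s, by omega⟩ : Fin (N + 1))] at hcast
      have hNs : N - ((⟨N - s, by omega⟩ : Fin (N + 1)) : ℕ) = s := by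
        simp only [Fin.val_mk]
        omega
      rw [hNs, Pi.zero_apply] at hcast
      rcases smul_eq_zero.mp hcast with h | h
      · exact absurd h (inv_ne_zero (Nat.cast_ne_zero.mpr (Nat.factorial_ne_zero _)))
      · exact h
    refine ContinuousLinearMap.ext fun u => ?_
    have hT := iteratedDeriv_clm_comp_const
      (ContinuousLinearMap.apply ℂ E u) hF_an s
    have heq2 : (fun z => (ContinuousLinearMap.apply ℂ E u) (F z))
        = fun z => (f z) (G z u) := by
      funext z
      simp [hFdef, ContinuousLinearMap.mul_apply]
    rw [heq2] at hT
    have hrfl : (iteratedDeriv s F 0) u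
        = ((ContinuousLinearMap.apply ℂ E) u) (iteratedDeriv s F 0) := rfl
    rw [ContinuousLinearMap.zero_apply, hrfl, ← hT]
    exact key u
  obtain ⟨H, hH_an, hHeq⟩ := shift m F hF_an hFvan
  -- assemble the neighborhood
  have hcomb : ∀ᶠ z in nhds (0 : ℂ), (F z = z ^ m • H z ∧ d z = (z - 0) ^ m • uu z)
      ∧ (AnalyticAt ℂ H z ∧ AnalyticAt ℂ uu z) ∧ z ∈ Ω :=
    ((hHeq.and huu_eq).and ((hH_an.eventually_analyticAt.and
      huu_an.eventually_analyticAt).and (hΩ.eventually_mem h0)))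
  obtain ⟨V, hVsub, hVopen, hV0⟩ := eventually_nhds_iff.mp hcomb
  set U : Set ℂ := V ∩ uu ⁻¹' {(0 : ℂ)}ᶜ with hUdef
  have hUopen : IsOpen U := by
    refine ContinuousOn.isOpen_inter_preimage ?_ hVopen isOpen_compl_singleton
    exact fun z hz => ((hVsub z hz).2.1.2).continuousAt.continuousWithinAt
  have hU0 : (0 : ℂ) ∈ U := ⟨hV0, by simpa using huu0⟩
  refine ⟨U, fun z => (Polynomial.eval z q * (uu z)⁻¹) • H z, hUopen, hU0, ?_, ?_⟩
  · intro z hz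
    have huz : uu z ≠ 0 := by simpa using hz.2
    have hH_at : AnalyticAt ℂ H z := (hVsub z hz.1).2.1.1
    have huu_at : AnalyticAt ℂ uu z := (hVsub z hz.1).2.1.2
    exact ((q.differentiable.differentiableAt.mul
      (huu_at.differentiableAt.inv huz)).smul hH_at.differentiableAt).differentiableWithinAt
  · intro z hz hu
    obtain ⟨⟨hFz, hdz⟩, _, hzΩ⟩ := hVsub z hz.1
    have huz : uu z ≠ 0 := by simpa using hz.2
    rw [sub_zero, smul_eq_mul] at hdz
    have hdnz : d z ≠ 0 := hunit_det z hzΩ hu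
    have hqz : Polynomial.eval z q ≠ 0 := (hq z hzΩ).1
    have hzm : (z ^ m : ℂ) ≠ 0 := by
      intro hcon
      exact hdnz (by rw [hdz, hcon, zero_mul])
    have hAz : A z = (Polynomial.eval z q)⁻¹ • P z := by
      rw [← hPA z hzΩ, smul_smul, inv_mul_cancel₀ hqz, one_smul]
    set B : E →L[ℂ] E := (Polynomial.eval z q * (d z)⁻¹) • G z with hBdef
    have hAB : A z * B = 1 := by
      rw [hBdef, hAz, smul_mul_assoc, mul_smul_comm, smul_smul, hPG z, smul_smul]
      rw [show (Polynomial.eval z q)⁻¹ * (Polynomial.eval z q * (d z)⁻¹) * d z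
          = 1 from by field_simp]
      rw [one_smul]
    have hinv : Ring.inverse (A z) = B := by
      obtain ⟨va, hva⟩ := hu
      rw [← hva, Ring.inverse_unit va]
      have hva' : (va : E →L[ℂ] E) * B = 1 := by rw [hva]; exact hAB
      calc ((va⁻¹ : (E →L[ℂ] E)ˣ) : E →L[ℂ] E)
          = ((va⁻¹ : (E →L[ℂ] E)ˣ) : E →L[ℂ] E) * ((va : E →L[ℂ] E) * B) := by
            rw [hva', mul_one]
        _ = (((va⁻¹ * va : (E →L[ℂ] E)ˣ) : E →L[ℂ] E)) * B := by
            rw [← mul_assoc, Units.val_mul]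
        _ = B := by rw [inv_mul_cancel, Units.val_one, one_mul]
    rw [hinv, hBdef, mul_smul_comm]
    have hFzu : f z * G z = F z := rfl
    rw [hFzu, hFz, smul_smul, hdz]
    have hscal : ∀ (a bb c : ℂ), bb ≠ 0 → c ≠ 0 → a * (bb * c)⁻¹ * bb = a * c⁻¹ := by
      intro a bb c hb hc
      field_simp
    rw [hscal _ _ _ hzm huz]
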